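/- Assume the standing hypotheses on (α,β) and p. For every integer k with a₂ + 1 ≤ k ≤ b₁, the rational function (t+k)·R(t) has nonvanishing denominator at t = −k (R has at most a simple pole there), and its value B_k at t = −k is a rational number with p-adic valuation at least 1 (that is, B_k ≡ 0 mod p). -/

import Mathlib

open scoped BigOperators
open Polynomial

noncomputable section

/-- The rising factorial (Pochhammer symbol) `(a)_k` for a rational `a`. -/
def poch (a : ℚ) (k : ℕ) : ℚ := Polynomial.eval a (ascPochhammer ℚ k)

/-- The numerator `N(t) = ∏_{i=2}^{n} ∏_{j=0}^{p−aᵢ−2} (t + 1 − rᵢ − p + j)` of the rational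
function `R(t)`, as a polynomial (`r`, `a` are 0-based: `rᵢ = r (i−1)`, `aᵢ = a (i−1)`). -/
def Rnum (n p : ℕ) (r : ℕ → ℚ) (a : ℕ → ℕ) : ℚ[X] :=
  ∏ i ∈ Finset.Icc 2 n, ∏ j ∈ Finset.range (p - a (i - 1) - 1),
    (X + C (1 - r (i - 1) - (p : ℚ) + (j : ℚ)))

/-- The denominator `D(t)` of `R(t)` with the simple factor `(t + a₁ + 1 + j)` at
`j = k − a₁ − 1` removed; i.e. the denominator of `(t+k)·R(t)` near `t = −k` for
`a₁ + 1 ≤ k ≤ b₁`.  Here `a₁ = a 0`, `b₁ = b 0`, `bᵢ = b (i−1)`. -/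
def RdenMid (p nhat : ℕ) (a1 b1 : ℕ) (b : ℕ → ℕ) (k : ℕ) : ℚ[X] :=
  (∏ j ∈ Finset.range (a1 + 1), (X + C (j : ℚ)) ^ 2) *
    (∏ j ∈ (Finset.range (b1 - a1)).filter (fun j => j ≠ k - a1 - 1),
      (X + C ((a1 : ℚ) + 1 + j))) *
    (∏ j ∈ Finset.range (p - b1 - 1), (X + C ((b1 : ℚ) + 1 + j)) ^ 2) *
    ∏ i ∈ Finset.Icc 2 nhat, ∏ j ∈ Finset.range (p - b (i - 1) - 1),
      (-X + C (1 + (i : ℚ) * p + (j : ℚ)))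

namespace Stmt15aux

variable {p : ℕ} [hp : Fact p.Prime]

omit hp in
lemma not_dvd_of_small (z : ℤ) (h0 : z ≠ 0) (hlo : -(p:ℤ) < z) (hhi : z < (p:ℤ)) :
    ¬ (p:ℤ) ∣ z := by
  intro hd
  have h1 : (p:ℤ) ≤ |z| := Int.le_of_dvd (abs_pos.2 h0) ((dvd_abs _ _).2 hd)
  rcases abs_cases z with ⟨h, _⟩ | ⟨h, _⟩ <;> omega

lemma norm_intCast_eq_one (z : ℤ) (h : ¬ (p:ℤ) ∣ z) : ‖(z : ℚ_[p])‖ = 1 := by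
  refine le_antisymm (Padic.norm_int_le_one z) ?_
  rcases lt_or_ge ‖(z : ℚ_[p])‖ 1 with hlt | hge
  · exact absurd ((Padic.norm_intCast_lt_one_iff (k := z)).1 hlt) h
  · exact hge

lemma norm_ratCast_int_eq_one (z : ℤ) (h : ¬ (p:ℤ) ∣ z) : ‖(((z:ℚ)) : ℚ_[p])‖ = 1 := by
  rw [show (((z:ℚ)) : ℚ_[p]) = (z : ℚ_[p]) by push_cast; ring]
  exact norm_intCast_eq_one z h

lemma norm_pm1_eq_one : ‖((p:ℚ_[p]) - 1)‖ = 1 := by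
  have h2 : 2 ≤ p := hp.out.two_le
  have : ((p:ℚ_[p]) - 1) = (((p:ℤ) - 1 : ℤ) : ℚ_[p]) := by push_cast; ring
  rw [this]
  exact norm_intCast_eq_one _ (not_dvd_of_small _ (by omega) (by omega) (by omega))

lemma norm_div_pm1_le (m : ℕ) : ‖((m : ℚ_[p]) / ((p:ℚ_[p]) - 1))‖ ≤ 1 := by
  rw [norm_div, norm_pm1_eq_one, div_one]
  exact_mod_cast Padic.norm_int_le_one (m : ℤ)

lemma norm_le_one_int_sub_div (z : ℤ) (m : ℕ) :
    ‖((((z:ℚ) - (m:ℚ)/((p:ℚ)-1)) : ℚ) : ℚ_[p])‖ ≤ 1 := by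
  have hcast : ((((z:ℚ) - (m:ℚ)/((p:ℚ)-1)) : ℚ) : ℚ_[p])
      = (z : ℚ_[p]) + (-((m : ℚ_[p]) / ((p:ℚ_[p]) - 1))) := by push_cast; ring
  rw [hcast]
  refine le_trans (Padic.nonarchimedean _ _) (max_le ?_ ?_)
  · exact Padic.norm_int_le_one z
  · rw [norm_neg]; exact norm_div_pm1_le m

end Stmt15aux

/-- Under the standing hypotheses on `(α,β)` and `p ≡ 1 (mod M)`:
for every `k` with `a₂ + 1 ≤ k ≤ b₁`, the rational function `(t+k)·R(t)` has nonvanishing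
denominator at `t = −k` (`R` has at most a simple pole there), and its value `B_k` at `t = −k`
satisfies `B_k ≡ 0 (mod p)`. -/
theorem residue_Bk_vanishes_mod_p_mid_range
    (n : ℕ) (hn : 2 ≤ n)
    (r q : ℕ → ℚ)
    (hr_pos : ∀ i, i < n → 0 < r i) (hr_lt : ∀ i, i < n → r i < 1)
    (hr_mono : ∀ i j, i ≤ j → j < n → r i ≤ r j)
    (hq_pos : ∀ i, i < n → 0 < q i)
    (hq_mono : ∀ i j, i ≤ j → j < n → q i ≤ q j)
    (hq_top : q (n - 1) = 1) (hq_top' : q (n - 2) = 1)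
    (hqr : ∀ j, j + 2 < n → r (j + 2) < q j)
    (hprim : ∀ i, i < n → ∀ j, j < n → ∀ z : ℤ, r i - q j ≠ (z : ℚ))
    (M : ℕ) (hM : 0 < M)
    (hMr : ∀ i, i < n → ∃ z : ℤ, (M : ℚ) * r i = (z : ℚ))
    (hMq : ∀ i, i < n → ∃ z : ℤ, (M : ℚ) * q i = (z : ℚ))
    (p : ℕ) [Fact (Nat.Prime p)] (hpM : p ≡ 1 [MOD M])
    (a b : ℕ → ℕ)
    (ha : ∀ i, i < n → (a i : ℚ) = ((p : ℚ) - 1) * r i)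
    (hb : ∀ i, i < n → (b i : ℚ) = ((p : ℚ) - 1) * q i)
    (nhat : ℕ) (hnhat_le : nhat ≤ n) (hnhat0 : nhat = 0 ∨ 2 ≤ nhat)
    (hnhat : ∀ i, 2 ≤ i → i ≤ n → (q (i - 1) < 1 ↔ i ≤ nhat))
    (k : ℕ) (hk : a 1 + 1 ≤ k) (hk' : k ≤ b 0) :
    (RdenMid p nhat (a 0) (b 0) b k).eval (-(k : ℚ)) ≠ 0 ∧
      ∃ c : ℤ_[p],
        (((Rnum n p r a).eval (-(k : ℚ)) /
            (RdenMid p nhat (a 0) (b 0) b k).eval (-(k : ℚ)) : ℚ) : ℚ_[p])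
          = (p : ℚ_[p]) * (c : ℚ_[p]) := by
  classical
  have hp : p.Prime := Fact.out
  have hp2 : 2 ≤ p := hp.two_le
  have hpQ : (0:ℚ) < (p:ℚ) - 1 := by
    have : (2:ℚ) ≤ (p:ℚ) := by exact_mod_cast hp2
    linarith
  have h0n : 0 < n := by omega
  have h1n : 1 < n := by omega
  have ha01 : a 0 ≤ a 1 := by
    have h := mul_le_mul_of_nonneg_left (hr_mono 0 1 (by omega) h1n) (le_of_lt hpQ)
    rw [← ha 0 h0n, ← ha 1 h1n] at h
    exact_mod_cast h
  have hq01 : q 0 ≤ 1 := by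
    have h := hq_mono 0 (n-1) (Nat.zero_le _) (by omega)
    rwa [hq_top] at h
  have hb0 : b 0 + 1 ≤ p := by
    have h := mul_le_mul_of_nonneg_left hq01 (le_of_lt hpQ)
    rw [← hb 0 h0n, mul_one] at h
    have h2 : (b 0:ℚ) + 1 ≤ (p:ℚ) := by linarith
    exact_mod_cast h2
  have hkp : k < p := by omega
  have hr_eq : ∀ i, i < n → r i = (a i : ℚ) / ((p:ℚ) - 1) := by
    intro i hi
    rw [eq_div_iff (ne_of_gt hpQ), ha i hi]
    ring
  set Nq := (Rnum n p r a).eval (-(k:ℚ)) with hNqdef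
  set Dq := (RdenMid p nhat (a 0) (b 0) b k).eval (-(k:ℚ)) with hDqdef
  have hNq : Nq = ∏ i ∈ Finset.Icc 2 n, ∏ j ∈ Finset.range (p - a (i-1) - 1),
      (-(k:ℚ) + (1 - r (i-1) - (p:ℚ) + (j:ℚ))) := by
    simp [hNqdef, Rnum, eval_prod]
  have hDq : Dq =
      (∏ j ∈ Finset.range (a 0 + 1), (-(k:ℚ) + (j:ℚ)) ^ 2) *
      (∏ j ∈ (Finset.range (b 0 - a 0)).filter (fun j => j ≠ k - a 0 - 1),
          (-(k:ℚ) + ((a 0:ℚ) + 1 + (j:ℚ)))) *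
      (∏ j ∈ Finset.range (p - b 0 - 1), (-(k:ℚ) + ((b 0:ℚ) + 1 + (j:ℚ))) ^ 2) *
      ∏ i ∈ Finset.Icc 2 nhat, ∏ j ∈ Finset.range (p - b (i - 1) - 1),
          ((k:ℚ) + (1 + (i:ℚ) * (p:ℚ) + (j:ℚ))) := by
    simp [hDqdef, RdenMid, eval_prod]
  -- denominator factor norms
  have hD1 : ∀ j ∈ Finset.range (a 0 + 1), ‖((-(k:ℚ) + (j:ℚ) : ℚ) : ℚ_[p])‖ = 1 := by
    intro j hj
    rw [Finset.mem_range] at hj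
    rw [show (-(k:ℚ) + (j:ℚ)) = (((j:ℤ) - (k:ℤ) : ℤ) : ℚ) by push_cast; ring]
    exact Stmt15aux.norm_ratCast_int_eq_one _
      (Stmt15aux.not_dvd_of_small _ (by omega) (by omega) (by omega))
  have hD2 : ∀ j ∈ (Finset.range (b 0 - a 0)).filter (fun j => j ≠ k - a 0 - 1),
      ‖((-(k:ℚ) + ((a 0:ℚ) + 1 + (j:ℚ)) : ℚ) : ℚ_[p])‖ = 1 := by
    intro j hj
    rw [Finset.mem_filter, Finset.mem_range] at hj
    obtain ⟨hj1, hj2⟩ := hj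
    rw [show (-(k:ℚ) + ((a 0:ℚ) + 1 + (j:ℚ)))
        = (((a 0:ℤ) + 1 + (j:ℤ) - (k:ℤ) : ℤ) : ℚ) by push_cast; ring]
    exact Stmt15aux.norm_ratCast_int_eq_one _
      (Stmt15aux.not_dvd_of_small _ (by omega) (by omega) (by omega))
  have hD3 : ∀ j ∈ Finset.range (p - b 0 - 1),
      ‖((-(k:ℚ) + ((b 0:ℚ) + 1 + (j:ℚ)) : ℚ) : ℚ_[p])‖ = 1 := by
    intro j hj
    rw [Finset.mem_range] at hj
    rw [show (-(k:ℚ) + ((b 0:ℚ) + 1 + (j:ℚ)))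
        = (((b 0:ℤ) + 1 + (j:ℤ) - (k:ℤ) : ℤ) : ℚ) by push_cast; ring]
    exact Stmt15aux.norm_ratCast_int_eq_one _
      (Stmt15aux.not_dvd_of_small _ (by omega) (by omega) (by omega))
  have hbmono : ∀ i, 2 ≤ i → i ≤ nhat → b 0 ≤ b (i-1) := by
    intro i h2 hle
    have hin : i - 1 < n := by omega
    have h := mul_le_mul_of_nonneg_left (hq_mono 0 (i-1) (Nat.zero_le _) hin) (le_of_lt hpQ)
    rw [← hb 0 h0n, ← hb (i-1) hin] at h
    exact_mod_cast h
  have hD4 : ∀ i ∈ Finset.Icc 2 nhat, ∀ j ∈ Finset.range (p - b (i-1) - 1),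
      ‖(((k:ℚ) + (1 + (i:ℚ) * (p:ℚ) + (j:ℚ)) : ℚ) : ℚ_[p])‖ = 1 := by
    intro i hi j hj
    rw [Finset.mem_Icc] at hi
    rw [Finset.mem_range] at hj
    have hb0i := hbmono i hi.1 hi.2
    rw [show ((k:ℚ) + (1 + (i:ℚ) * (p:ℚ) + (j:ℚ)))
        = ((((k:ℤ) + 1 + (j:ℤ)) + (i:ℤ) * (p:ℤ) : ℤ) : ℚ) by push_cast; ring]
    refine Stmt15aux.norm_ratCast_int_eq_one _ ?_
    rw [dvd_add_left ⟨(i:ℤ), mul_comm _ _⟩]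
    exact Stmt15aux.not_dvd_of_small _ (by omega) (by omega) (by omega)
  have hDnorm : ‖((Dq : ℚ) : ℚ_[p])‖ = 1 := by
    rw [hDq, Rat.cast_mul, Rat.cast_mul, Rat.cast_mul,
        norm_mul, norm_mul, norm_mul,
        Rat.cast_prod, Rat.cast_prod, Rat.cast_prod, Rat.cast_prod,
        norm_prod, norm_prod, norm_prod, norm_prod]
    rw [Finset.prod_eq_one (fun j hj => by rw [Rat.cast_pow, norm_pow, hD1 j hj, one_pow]),
        Finset.prod_eq_one (fun j hj => hD2 j hj),
        Finset.prod_eq_one (fun j hj => by rw [Rat.cast_pow, norm_pow, hD3 j hj, one_pow]),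
        Finset.prod_eq_one (fun i hi => by
          rw [Rat.cast_prod, norm_prod]
          exact Finset.prod_eq_one (fun j hj => hD4 i hi j hj))]
    norm_num
  have hDne0 : Dq ≠ 0 := by
    intro h
    rw [h] at hDnorm
    simp at hDnorm
  -- numerator
  have h2mem : 2 ∈ Finset.Icc 2 n := Finset.mem_Icc.2 ⟨le_refl 2, hn⟩
  have hj0mem : k - a 1 - 1 ∈ Finset.range (p - a 1 - 1) := Finset.mem_range.2 (by omega)
  have hfacN : ∀ i, 2 ≤ i → i ≤ n → ∀ j : ℕ,
      ‖((-(k:ℚ) + (1 - r (i-1) - (p:ℚ) + (j:ℚ)) : ℚ) : ℚ_[p])‖ ≤ 1 := by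
    intro i hi2 hin' j
    have hin : i - 1 < n := by omega
    rw [show (-(k:ℚ) + (1 - r (i-1) - (p:ℚ) + (j:ℚ)))
        = ((1 + (j:ℤ) - (k:ℤ) - (p:ℤ) : ℤ) : ℚ) - (a (i-1) : ℚ) / ((p:ℚ) - 1) by
          rw [hr_eq _ hin]; push_cast; ring]
    exact Stmt15aux.norm_le_one_int_sub_div _ _
  have hj0cast : ((k - a 1 - 1 : ℕ) : ℚ) = (k:ℚ) - (a 1:ℚ) - 1 := by
    rw [Nat.cast_sub (by omega : 1 ≤ k - a 1), Nat.cast_sub (by omega : a 1 ≤ k)]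
    push_cast; ring
  have hspecnorm : ‖((-(k:ℚ) + (1 - r 1 - (p:ℚ) + ((k - a 1 - 1:ℕ):ℚ)) : ℚ) : ℚ_[p])‖
      ≤ (p:ℝ)⁻¹ := by
    have hspecial : (-(k:ℚ) + (1 - r 1 - (p:ℚ) + ((k - a 1 - 1 : ℕ):ℚ)))
        = -(p:ℚ) * (((p:ℚ) - 1 + (a 1:ℚ)) / ((p:ℚ) - 1)) := by
      rw [hj0cast, hr_eq 1 h1n]
      field_simp
      ring
    rw [hspecial]
    rw [show ((-(p:ℚ) * (((p:ℚ)-1+(a 1:ℚ))/((p:ℚ)-1)) : ℚ) : ℚ_[p])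
        = -((p:ℚ_[p]) * ((((p:ℤ)-1+(a 1:ℤ) : ℤ):ℚ_[p]) / ((p:ℚ_[p])-1))) by push_cast; ring]
    rw [norm_neg, norm_mul, Padic.norm_p, norm_div, Stmt15aux.norm_pm1_eq_one, div_one]
    have h1 := Padic.norm_int_le_one (p := p) ((p:ℤ) - 1 + (a 1:ℤ))
    have hpinv : (0:ℝ) ≤ (p:ℝ)⁻¹ := by positivity
    calc (p:ℝ)⁻¹ * ‖(((p:ℤ)-1+(a 1:ℤ) : ℤ):ℚ_[p])‖ ≤ (p:ℝ)⁻¹ * 1 :=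
          mul_le_mul_of_nonneg_left h1 hpinv
      _ = (p:ℝ)⁻¹ := mul_one _
  have hNnorm : ‖((Nq : ℚ) : ℚ_[p])‖ ≤ (p:ℝ)⁻¹ := by
    rw [hNq, Rat.cast_prod, ← Finset.mul_prod_erase _ _ h2mem]
    simp only [show (2:ℕ) - 1 = 1 by norm_num]
    rw [Rat.cast_prod, ← Finset.mul_prod_erase _ _ hj0mem, norm_mul, norm_mul]
    have hb1 : ‖∏ j ∈ (Finset.range (p - a 1 - 1)).erase (k - a 1 - 1),
        ((-(k:ℚ) + (1 - r 1 - (p:ℚ) + (j:ℚ)) : ℚ) : ℚ_[p])‖ ≤ 1 := by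
      rw [norm_prod]
      exact Finset.prod_le_one (fun j _ => norm_nonneg _) (fun j _ => hfacN 2 le_rfl hn j)
    have hc1 : ‖∏ i ∈ (Finset.Icc 2 n).erase 2,
        ((∏ j ∈ Finset.range (p - a (i-1) - 1),
          (-(k:ℚ) + (1 - r (i-1) - (p:ℚ) + (j:ℚ))) : ℚ) : ℚ_[p])‖ ≤ 1 := by
      rw [norm_prod]
      refine Finset.prod_le_one (fun i _ => norm_nonneg _) (fun i hi => ?_)
      have hi' := Finset.mem_Icc.1 (Finset.mem_of_mem_erase hi)
      rw [Rat.cast_prod, norm_prod]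
      exact Finset.prod_le_one (fun j _ => norm_nonneg _)
        (fun j _ => hfacN i hi'.1 hi'.2 j)
    have hpinv : (0:ℝ) ≤ (p:ℝ)⁻¹ := by positivity
    calc ‖((-(k:ℚ) + (1 - r 1 - (p:ℚ) + ((k - a 1 - 1:ℕ):ℚ)) : ℚ) : ℚ_[p])‖ *
          ‖∏ j ∈ (Finset.range (p - a 1 - 1)).erase (k - a 1 - 1),
            ((-(k:ℚ) + (1 - r 1 - (p:ℚ) + (j:ℚ)) : ℚ) : ℚ_[p])‖ *
          ‖∏ i ∈ (Finset.Icc 2 n).erase 2,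
            ((∏ j ∈ Finset.range (p - a (i-1) - 1),
              (-(k:ℚ) + (1 - r (i-1) - (p:ℚ) + (j:ℚ))) : ℚ) : ℚ_[p])‖
        ≤ (p:ℝ)⁻¹ * 1 * 1 := by gcongr
      _ = (p:ℝ)⁻¹ := by ring
  refine ⟨hDne0, ?_⟩
  have hxnorm : ‖(((Nq / Dq : ℚ)) : ℚ_[p])‖ ≤ (p:ℝ)⁻¹ := by
    rw [Rat.cast_div, norm_div, hDnorm, div_one]
    exact hNnorm
  have hpR : (0:ℝ) < (p:ℝ) := by exact_mod_cast hp.pos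
  have hpne : (p:ℚ_[p]) ≠ 0 := by
    exact_mod_cast (Nat.cast_ne_zero (R := ℚ_[p])).2 hp.pos.ne'
  refine ⟨⟨((Nq / Dq : ℚ) : ℚ_[p]) * (p:ℚ_[p])⁻¹, ?_⟩, ?_⟩
  · rw [norm_mul, norm_inv, Padic.norm_p, inv_inv]
    calc ‖((Nq / Dq : ℚ) : ℚ_[p])‖ * (p:ℝ) ≤ (p:ℝ)⁻¹ * (p:ℝ) :=
          mul_le_mul_of_nonneg_right hxnorm (le_of_lt hpR)
      _ = 1 := inv_mul_cancel₀ (ne_of_gt hpR)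
  · show ((Nq / Dq : ℚ) : ℚ_[p]) = (p:ℚ_[p]) * (((Nq / Dq : ℚ) : ℚ_[p]) * (p:ℚ_[p])⁻¹)
    rw [mul_comm ((p:ℚ_[p])) _, mul_assoc, inv_mul_cancel₀ hpne, mul_one]
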